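/- arXiv:2302.12183 — 2 statements merged into one kernel-verified Lean document; each statement's English description precedes it below -/
import Mathlib

section
/- Let ψ : [a,b] → ℝ be C¹, increasing with ψ' > 0, let 0 < α < 1 and 0 ≤ γ ≤ 1. If f is continuous on (a,b] and there is M > 0 with |(ψ(x) − ψ(a))^γ f(x)| < M for all x ∈ (a,b], and γ < α, then lim_{x → a⁺} (I_{a+}^{α;ψ} f)(x) = 0. -/
open Real MeasureTheory Set

/-- The left ψ-Riemann–Liouville fractional integral of order α with base point a. -/
noncomputable def psiRL (ψ : ℝ → ℝ) (α a : ℝ) (f : ℝ → ℝ) (x : ℝ) : ℝ :=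
  (1 / Real.Gamma α) * ∫ s in a..x, deriv ψ s * (ψ x - ψ s) ^ (α - 1) * f s

theorem psiRL_tendsto_zero (a b α γ : ℝ) (ψ f : ℝ → ℝ) (hab : a < b)
    (hψ : ContDiffOn ℝ 1 ψ (Icc a b)) (hmono : StrictMonoOn ψ (Icc a b))
    (hψ' : ∀ x ∈ Icc a b, 0 < deriv ψ x)
    (hα0 : 0 < α) (hα1 : α < 1) (hγ0 : 0 ≤ γ) (hγ1 : γ ≤ 1)
    (hf : ContinuousOn f (Ioc a b))
    (M : ℝ) (hM : 0 < M)
    (hbound : ∀ x ∈ Ioc a b, |(ψ x - ψ a) ^ γ * f x| < M)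
    (hγα : γ < α) :
    Filter.Tendsto (psiRL ψ α a f) (nhdsWithin a (Set.Ioi a)) (nhds 0) := by
  have hγ1' : γ < 1 := lt_of_lt_of_le hγα hα1.le
  have hdiff : ∀ s ∈ Icc a b, DifferentiableAt ℝ ψ s := fun s hs =>
    differentiableAt_of_deriv_ne_zero (hψ' s hs).ne'
  have hψcont : ContinuousOn ψ (Icc a b) := hψ.continuousOn
  have hdc : ContinuousOn (deriv ψ) (Icc a b) := by
    have h1 : ContinuousOn (derivWithin ψ (Icc a b)) (Icc a b) :=
      hψ.continuousOn_derivWithin (uniqueDiffOn_Icc hab) le_rfl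
    exact h1.congr fun s hs =>
      ((hdiff s hs).derivWithin ((uniqueDiffOn_Icc hab) s hs)).symm
  obtain ⟨s₀, hs₀, hminOn⟩ :=
    isCompact_Icc.exists_isMinOn (nonempty_Icc.2 hab.le) hdc
  obtain ⟨s₁, hs₁, hmaxOn⟩ :=
    isCompact_Icc.exists_isMaxOn (nonempty_Icc.2 hab.le) hdc
  set c : ℝ := deriv ψ s₀ with hc_def
  set Cm : ℝ := deriv ψ s₁ with hCm_def
  have hc : 0 < c := hψ' s₀ hs₀
  have hCm : 0 < Cm := hψ' s₁ hs₁
  have hcle : ∀ s ∈ Icc a b, c ≤ deriv ψ s := fun s hs => hminOn hs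
  have hCmge : ∀ s ∈ Icc a b, deriv ψ s ≤ Cm := fun s hs => hmaxOn hs
  -- MVT inequality
  have hMVT : ∀ u ∈ Icc a b, ∀ v ∈ Icc a b, u ≤ v → c * (v - u) ≤ ψ v - ψ u := by
    intro u hu v hv huv
    rcases eq_or_lt_of_le huv with rfl | h
    · simp
    · obtain ⟨ξ, hξ, hslope⟩ := exists_hasDerivAt_eq_slope ψ (deriv ψ) h
        (hψcont.mono (Icc_subset_Icc hu.1 hv.2))
        (fun y hy => (hdiff y ⟨hu.1.trans hy.1.le, hy.2.le.trans hv.2⟩).hasDerivAt)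
      have hξab : ξ ∈ Icc a b := ⟨hu.1.trans hξ.1.le, hξ.2.le.trans hv.2⟩
      have h1 : c ≤ (ψ v - ψ u) / (v - u) := hslope ▸ hcle ξ hξab
      have h2 : 0 < v - u := sub_pos.2 h
      calc c * (v - u) ≤ ((ψ v - ψ u) / (v - u)) * (v - u) :=
            mul_le_mul_of_nonneg_right h1 h2.le
        _ = ψ v - ψ u := by field_simp
  -- |f| bound
  have hfb : ∀ s ∈ Ioc a b, |f s| ≤ M * (ψ s - ψ a) ^ (-γ) := by
    intro s hs
    have hsa : 0 < s - a := sub_pos.2 hs.1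
    have hps : 0 < ψ s - ψ a :=
      lt_of_lt_of_le (mul_pos hc hsa) (hMVT a ⟨le_rfl, hab.le⟩ s ⟨hs.1.le, hs.2⟩ hs.1.le)
    have hpow : 0 < (ψ s - ψ a) ^ γ := Real.rpow_pos_of_pos hps γ
    have h := (hbound s hs).le
    rw [abs_mul, abs_of_pos hpow] at h
    have h2 : |f s| ≤ M / (ψ s - ψ a) ^ γ := by
      rw [le_div_iff₀ hpow]; linarith [mul_comm ((ψ s - ψ a) ^ γ) (|f s|)]
    rw [Real.rpow_neg hps.le]
    rwa [div_eq_mul_inv] at h2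
  set Q : ℝ := Cm * M * c ^ (α - 1) * c ^ (-γ) with hQ_def
  have hQ : 0 < Q :=
    mul_pos (mul_pos (mul_pos hCm hM) (Real.rpow_pos_of_pos hc _)) (Real.rpow_pos_of_pos hc _)
  set D : ℝ := (1 / Real.Gamma α) * Q * (1 / (1 - γ) + 1 / α) with hD_def
  have hΓ : 0 < Real.Gamma α := Real.Gamma_pos_of_pos hα0
  have h1γ : 0 < 1 - γ := by linarith
  -- main pointwise bound
  have key : ∀ x ∈ Ioc a b, |psiRL ψ α a f x| ≤ D * (x - a) ^ (α - γ) := by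
    intro x hx
    set T : ℝ := x - a with hT_def
    have hT : 0 < T := sub_pos.2 hx.1
    have hhalf : (0:ℝ) < T / 2 := by linarith
    have hcT : 0 < c * (T / 2) := mul_pos hc hhalf
    set m : ℝ := (a + x) / 2 with hm_def
    have ham : a < m := by rw [hm_def]; linarith [hx.1]
    have hmx : m < x := by rw [hm_def]; linarith [hx.1]
    have hmb : m ∈ Icc a b := ⟨ham.le, le_trans hmx.le hx.2⟩
    have hxb : x ∈ Icc a b := ⟨hx.1.le, hx.2⟩
    have hma : m - a = T / 2 := by rw [hm_def, hT_def]; ring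
    have hxm : x - m = T / 2 := by rw [hm_def, hT_def]; ring
    set F : ℝ → ℝ := fun s => deriv ψ s * (ψ x - ψ s) ^ (α - 1) * f s with hF_def
    set K1 : ℝ := Cm * M * c ^ (-γ) * (c * (T / 2)) ^ (α - 1) with hK1_def
    set K2 : ℝ := Cm * M * (c * (T / 2)) ^ (-γ) * c ^ (α - 1) with hK2_def
    have hK1 : 0 < K1 :=
      mul_pos (mul_pos (mul_pos hCm hM) (Real.rpow_pos_of_pos hc _))
        (Real.rpow_pos_of_pos hcT _)
    have hK2 : 0 < K2 :=
      mul_pos (mul_pos (mul_pos hCm hM) (Real.rpow_pos_of_pos hcT _))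
        (Real.rpow_pos_of_pos hc _)
    -- pointwise bounds
    have hpt1 : ∀ s ∈ Ioc a m, ‖F s‖ ≤ K1 * (s - a) ^ (-γ) := by
      intro s hs
      have hsab : s ∈ Icc a b := ⟨hs.1.le, hs.2.trans hmb.2⟩
      have hsa : 0 < s - a := sub_pos.2 hs.1
      have hψsa : c * (s - a) ≤ ψ s - ψ a := hMVT a ⟨le_rfl, hab.le⟩ s hsab hs.1.le
      have hψxs : c * (T / 2) ≤ ψ x - ψ s := by
        have h1 := hMVT m hmb x hxb hmx.le
        have h2 := hMVT s hsab m hmb hs.2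
        have h3 : 0 ≤ ψ m - ψ s :=
          le_trans (mul_nonneg hc.le (sub_nonneg.2 hs.2)) h2
        rw [hxm] at h1; linarith
      have hψxs0 : 0 ≤ ψ x - ψ s := le_trans hcT.le hψxs
      have hb1 : (ψ x - ψ s) ^ (α - 1) ≤ (c * (T / 2)) ^ (α - 1) :=
        Real.rpow_le_rpow_of_nonpos hcT hψxs (by linarith)
      have hb2 : |f s| ≤ M * (c * (s - a)) ^ (-γ) := by
        refine le_trans (hfb s ⟨hs.1, hs.2.trans hmb.2⟩) ?_
        exact mul_le_mul_of_nonneg_left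
          (Real.rpow_le_rpow_of_nonpos (mul_pos hc hsa) hψsa (by linarith)) hM.le
      have hd1 : 0 < deriv ψ s := hψ' s hsab
      have hFabs : ‖F s‖ = deriv ψ s * (ψ x - ψ s) ^ (α - 1) * |f s| := by
        rw [hF_def]
        simp only [Real.norm_eq_abs, abs_mul]
        rw [abs_of_pos hd1, abs_of_nonneg (Real.rpow_nonneg hψxs0 _)]
      rw [hFabs]
      calc deriv ψ s * (ψ x - ψ s) ^ (α - 1) * |f s|
          ≤ Cm * (c * (T / 2)) ^ (α - 1) * (M * (c * (s - a)) ^ (-γ)) := by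
            apply mul_le_mul _ hb2 (abs_nonneg _)
              (mul_nonneg hCm.le (Real.rpow_nonneg hcT.le _))
            exact mul_le_mul (hCmge s hsab) hb1 (Real.rpow_nonneg hψxs0 _) hCm.le
        _ = K1 * (s - a) ^ (-γ) := by
            rw [hK1_def, Real.mul_rpow hc.le hsa.le]; ring
    have hpt2 : ∀ s ∈ Ioc m x, ‖F s‖ ≤ K2 * (x - s) ^ (α - 1) := by
      intro s hs
      have hsab : s ∈ Icc a b := ⟨(ham.trans hs.1).le, hs.2.trans hx.2⟩
      have hψsa : c * (T / 2) ≤ ψ s - ψ a := by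
        have h1 := hMVT a ⟨le_rfl, hab.le⟩ m hmb ham.le
        have h2 := hMVT m hmb s hsab hs.1.le
        have h3 : 0 ≤ ψ s - ψ m :=
          le_trans (mul_nonneg hc.le (sub_nonneg.2 hs.1.le)) h2
        rw [hma] at h1; linarith
      have hψxs : c * (x - s) ≤ ψ x - ψ s := hMVT s hsab x hxb hs.2
      have hψxs0 : 0 ≤ ψ x - ψ s :=
        le_trans (mul_nonneg hc.le (sub_nonneg.2 hs.2)) hψxs
      have hd1 : 0 < deriv ψ s := hψ' s hsab
      have hb2 : |f s| ≤ M * (c * (T / 2)) ^ (-γ) := by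
        refine le_trans (hfb s ⟨ham.trans hs.1, hs.2.trans hx.2⟩) ?_
        exact mul_le_mul_of_nonneg_left
          (Real.rpow_le_rpow_of_nonpos hcT hψsa (by linarith)) hM.le
      have hb1 : (ψ x - ψ s) ^ (α - 1) ≤ (c * (x - s)) ^ (α - 1) := by
        rcases eq_or_lt_of_le hs.2 with rfl | hlt
        · simp [Real.zero_rpow (show α - 1 ≠ 0 by linarith)]
        · exact Real.rpow_le_rpow_of_nonpos (mul_pos hc (sub_pos.2 hlt)) hψxs (by linarith)
      have hFabs : ‖F s‖ = deriv ψ s * (ψ x - ψ s) ^ (α - 1) * |f s| := by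
        rw [hF_def]
        simp only [Real.norm_eq_abs, abs_mul]
        rw [abs_of_pos hd1, abs_of_nonneg (Real.rpow_nonneg hψxs0 _)]
      rw [hFabs]
      calc deriv ψ s * (ψ x - ψ s) ^ (α - 1) * |f s|
          ≤ Cm * (c * (x - s)) ^ (α - 1) * (M * (c * (T / 2)) ^ (-γ)) := by
            apply mul_le_mul _ hb2 (abs_nonneg _)
              (mul_nonneg hCm.le (Real.rpow_nonneg (mul_nonneg hc.le (sub_nonneg.2 hs.2)) _))
            exact mul_le_mul (hCmge s hsab) hb1 (Real.rpow_nonneg hψxs0 _) hCm.le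
        _ = K2 * (x - s) ^ (α - 1) := by
            rw [hK2_def, Real.mul_rpow hc.le (sub_nonneg.2 hs.2)]; ring
    -- integrability of dominating functions
    have hi1 : IntervalIntegrable (fun s => (s - a) ^ (-γ)) volume a m := by
      simpa using (intervalIntegral.intervalIntegrable_rpow'
        (a := 0) (b := m - a) (show (-1:ℝ) < -γ by linarith)).comp_sub_right a
    have hi2 : IntervalIntegrable (fun s => (x - s) ^ (α - 1)) volume m x := by
      have := (intervalIntegral.intervalIntegrable_rpow'
        (a := 0) (b := x - m) (show (-1:ℝ) < α - 1 by linarith)).comp_sub_left x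
      simpa using this.symm
    have hg1 : IntervalIntegrable (fun s => K1 * (s - a) ^ (-γ)) volume a m := hi1.const_mul K1
    have hg2 : IntervalIntegrable (fun s => K2 * (x - s) ^ (α - 1)) volume m x := hi2.const_mul K2
    -- continuity of F
    have hFc1 : ContinuousOn F (Ioc a m) := by
      apply ContinuousOn.mul
      apply ContinuousOn.mul
      · exact hdc.mono fun s hs => ⟨hs.1.le, hs.2.trans hmb.2⟩
      · apply ContinuousOn.rpow_const
        · exact continuousOn_const.sub (hψcont.mono fun s hs => ⟨hs.1.le, hs.2.trans hmb.2⟩)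
        · intro s hs
          left
          have hψxs : c * (T / 2) ≤ ψ x - ψ s := by
            have h2 := hMVT s ⟨hs.1.le, hs.2.trans hmb.2⟩ m hmb hs.2
            have h1 := hMVT m hmb x hxb hmx.le
            have h3 : 0 ≤ ψ m - ψ s :=
              le_trans (mul_nonneg hc.le (sub_nonneg.2 hs.2)) h2
            rw [hxm] at h1; linarith
          exact (lt_of_lt_of_le hcT hψxs).ne'
      · exact hf.mono fun s hs => ⟨hs.1, hs.2.trans hmb.2⟩
    have hFc2 : ContinuousOn F (Ioo m x) := by
      apply ContinuousOn.mul
      apply ContinuousOn.mul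
      · exact hdc.mono fun s hs => ⟨(ham.trans hs.1).le, hs.2.le.trans hx.2⟩
      · apply ContinuousOn.rpow_const
        · exact continuousOn_const.sub
            (hψcont.mono fun s hs => ⟨(ham.trans hs.1).le, hs.2.le.trans hx.2⟩)
        · intro s hs
          left
          have hψxs : c * (x - s) ≤ ψ x - ψ s :=
            hMVT s ⟨(ham.trans hs.1).le, hs.2.le.trans hx.2⟩ x hxb hs.2.le
          exact (lt_of_lt_of_le (mul_pos hc (sub_pos.2 hs.2)) hψxs).ne'
      · exact hf.mono fun s hs => ⟨ham.trans hs.1, hs.2.le.trans hx.2⟩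
    -- integrability of F
    have hF1 : IntervalIntegrable F volume a m := by
      rw [intervalIntegrable_iff_integrableOn_Ioc_of_le ham.le]
      apply Integrable.mono' ((intervalIntegrable_iff_integrableOn_Ioc_of_le ham.le).1 hg1)
      · exact hFc1.aestronglyMeasurable measurableSet_Ioc
      · exact (ae_restrict_iff' measurableSet_Ioc).2 (ae_of_all _ hpt1)
    have hF2 : IntervalIntegrable F volume m x := by
      rw [intervalIntegrable_iff_integrableOn_Ioc_of_le hmx.le,
        integrableOn_Ioc_iff_integrableOn_Ioo]
      apply Integrable.mono'
        ((((intervalIntegrable_iff_integrableOn_Ioc_of_le hmx.le).1 hg2)).mono_set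
          Ioo_subset_Ioc_self)
      · exact hFc2.aestronglyMeasurable measurableSet_Ioo
      · exact (ae_restrict_iff' measurableSet_Ioo).2
          (ae_of_all _ fun s hs => hpt2 s (Ioo_subset_Ioc_self hs))
    -- integral computations
    have hI1 : (∫ s in a..m, (s - a) ^ (-γ)) = (T / 2) ^ (1 - γ) / (1 - γ) := by
      have h := intervalIntegral.integral_comp_sub_right (a := a) (b := m) (fun u => u ^ (-γ)) a
      simp only [sub_self] at h
      rw [h, hma, integral_rpow (Or.inl (by linarith)),
        Real.zero_rpow (by linarith : -γ + 1 ≠ 0), show -γ + 1 = 1 - γ from by ring]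
      norm_num
    have hI2 : (∫ s in m..x, (x - s) ^ (α - 1)) = (T / 2) ^ α / α := by
      have h := intervalIntegral.integral_comp_sub_left (a := m) (b := x) (fun u => u ^ (α - 1)) x
      simp only [sub_self] at h
      rw [h, hxm, integral_rpow (Or.inl (by linarith)),
        Real.zero_rpow (by linarith : α - 1 + 1 ≠ 0)]
      norm_num
    -- bounding the pieces
    have hB1 : ‖∫ s in a..m, F s‖ ≤ K1 * ((T / 2) ^ (1 - γ) / (1 - γ)) := by
      refine le_trans (intervalIntegral.norm_integral_le_abs_of_norm_le ?_ hg1) ?_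
      · rw [uIoc_of_le ham.le]
        exact (ae_restrict_iff' measurableSet_Ioc).2 (ae_of_all _ hpt1)
      · rw [intervalIntegral.integral_const_mul, hI1,
          abs_of_nonneg (by positivity)]
    have hB2 : ‖∫ s in m..x, F s‖ ≤ K2 * ((T / 2) ^ α / α) := by
      refine le_trans (intervalIntegral.norm_integral_le_abs_of_norm_le ?_ hg2) ?_
      · rw [uIoc_of_le hmx.le]
        exact (ae_restrict_iff' measurableSet_Ioc).2 (ae_of_all _ hpt2)
      · rw [intervalIntegral.integral_const_mul, hI2,
          abs_of_nonneg (by positivity)]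
    -- exponent algebra
    have hle : (T / 2) ^ (α - γ) ≤ T ^ (α - γ) :=
      Real.rpow_le_rpow hhalf.le (by linarith) (by linarith)
    have hKQ1 : K1 * ((T / 2) ^ (1 - γ) / (1 - γ)) ≤ Q * T ^ (α - γ) / (1 - γ) := by
      have hexp : (T / 2) ^ (α - 1) * (T / 2) ^ (1 - γ) = (T / 2) ^ (α - γ) := by
        rw [← Real.rpow_add hhalf]; norm_num
      calc K1 * ((T / 2) ^ (1 - γ) / (1 - γ))
          = Q * ((T / 2) ^ (α - 1) * (T / 2) ^ (1 - γ)) / (1 - γ) := by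
            rw [hK1_def, hQ_def, Real.mul_rpow hc.le hhalf.le]; ring
        _ = Q * (T / 2) ^ (α - γ) / (1 - γ) := by rw [hexp]
        _ ≤ Q * T ^ (α - γ) / (1 - γ) :=
            (div_le_div_iff_of_pos_right h1γ).2 (mul_le_mul_of_nonneg_left hle hQ.le)
    have hKQ2 : K2 * ((T / 2) ^ α / α) ≤ Q * T ^ (α - γ) / α := by
      have hexp : (T / 2) ^ (-γ) * (T / 2) ^ α = (T / 2) ^ (α - γ) := by
        rw [← Real.rpow_add hhalf]; congr 1; ring
      calc K2 * ((T / 2) ^ α / α)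
          = Q * ((T / 2) ^ (-γ) * (T / 2) ^ α) / α := by
            rw [hK2_def, hQ_def, Real.mul_rpow hc.le hhalf.le]; ring
        _ = Q * (T / 2) ^ (α - γ) / α := by rw [hexp]
        _ ≤ Q * T ^ (α - γ) / α :=
            (div_le_div_iff_of_pos_right hα0).2 (mul_le_mul_of_nonneg_left hle hQ.le)
    -- assembling
    have hsplit : (∫ s in a..x, F s) = (∫ s in a..m, F s) + ∫ s in m..x, F s :=
      (intervalIntegral.integral_add_adjacent_intervals hF1 hF2).symm
    have habs : |psiRL ψ α a f x| = (1 / Real.Gamma α) * |∫ s in a..x, F s| := by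
      rw [psiRL, abs_mul, abs_of_pos (by positivity : (0:ℝ) < 1 / Real.Gamma α)]
    rw [habs, hsplit]
    calc (1 / Real.Gamma α) * |(∫ s in a..m, F s) + ∫ s in m..x, F s|
        ≤ (1 / Real.Gamma α) * (‖∫ s in a..m, F s‖ + ‖∫ s in m..x, F s‖) :=
          mul_le_mul_of_nonneg_left (abs_add_le _ _) (by positivity)
      _ ≤ (1 / Real.Gamma α) * (Q * T ^ (α - γ) / (1 - γ) + Q * T ^ (α - γ) / α) :=
          mul_le_mul_of_nonneg_left
            (add_le_add (hB1.trans hKQ1) (hB2.trans hKQ2)) (by positivity)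
      _ = D * T ^ (α - γ) := by rw [hD_def]; ring
  -- final squeeze
  have hev : ∀ᶠ x in nhdsWithin a (Set.Ioi a), ‖psiRL ψ α a f x‖ ≤ D * (x - a) ^ (α - γ) := by
    filter_upwards [Ioc_mem_nhdsGT_of_mem (⟨le_rfl, hab⟩ : a ∈ Ico a b)] with x hx
    simpa using key x hx
  have hg : Filter.Tendsto (fun x => D * (x - a) ^ (α - γ)) (nhdsWithin a (Set.Ioi a)) (nhds 0) := by
    have h1 : Filter.Tendsto (fun x : ℝ => x - a) (nhdsWithin a (Set.Ioi a)) (nhds 0) := by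
      have h0 : Filter.Tendsto (fun x : ℝ => x - a) (nhds a) (nhds (a - a)) :=
        (continuous_id.sub continuous_const).tendsto a
      rw [sub_self] at h0
      exact h0.mono_left nhdsWithin_le_nhds
    have h2 : ContinuousAt (fun t : ℝ => t ^ (α - γ)) 0 :=
      Real.continuousAt_rpow_const 0 _ (Or.inr (by linarith))
    have h3 := (h2.tendsto.comp h1)
    rw [Real.zero_rpow (by linarith : α - γ ≠ 0)] at h3
    have := h3.const_mul D
    simpa using this
  exact squeeze_zero_norm' hev hg
end

section
/- Let J = [0,1], ψ : J → ℝ be C¹ increasing with ψ' > 0, let 0 < α < 1, 0 ≤ β ≤ 1 and γ = α + β(1−α). Suppose f : J × ℝ → ℝ is continuous, bounded by M > 0, and L-Lipschitz in the second variable, with L (ψ(1) − ψ(0))^α / Γ(α+1) < 1. Then the integral equation y(t) = (1/Γ(α)) ∫_0^t ψ'(s)(ψ(t) − ψ(s))^{α−1} f(s, y(s)) ds has a unique solution y in the weighted space C_{1−γ,ψ}(J). -/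
open Real MeasureTheory Set

/-- Membership in the weighted space `C_{1-γ,ψ}([0,1])`: the weighted function
`t ↦ (ψ t - ψ 0)^(1-γ) y t` extends continuously to `[0,1]`. -/
def MemWeighted (ψ : ℝ → ℝ) (γ : ℝ) (y : ℝ → ℝ) : Prop :=
  ∃ g : ℝ → ℝ, ContinuousOn g (Icc (0:ℝ) 1) ∧
    ∀ t ∈ Ioc (0:ℝ) 1, g t = (ψ t - ψ 0) ^ (1 - γ) * y t

lemma aux_ftc {ψ : ℝ → ℝ} {α : ℝ} (hψ : ContDiffOn ℝ 1 ψ (Icc 0 1))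
    (hmono : StrictMonoOn ψ (Icc (0:ℝ) 1)) (hψ' : ∀ x ∈ Icc (0:ℝ) 1, 0 < deriv ψ x)
    (hα0 : 0 < α) (hα1 : α < 1) {u v c : ℝ} (h0u : 0 ≤ u) (huv : u ≤ v) (hv1 : v ≤ 1)
    (hc : ψ v ≤ c) :
    IntervalIntegrable (fun s => deriv ψ s * (c - ψ s) ^ (α - 1)) volume u v ∧
    ∫ s in u..v, deriv ψ s * (c - ψ s) ^ (α - 1) = ((c - ψ u) ^ α - (c - ψ v) ^ α) / α := by
  have hsub : Icc u v ⊆ Icc (0:ℝ) 1 := Icc_subset_Icc h0u hv1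
  have hψc : ContinuousOn ψ (Icc u v) := (hψ.continuousOn).mono hsub
  have hle : ∀ s ∈ Icc u v, ψ s ≤ c := fun s hs =>
    le_trans (hmono.monotoneOn (hsub hs) (hsub (right_mem_Icc.2 huv)) hs.2) hc
  have hFcont : ContinuousOn (fun s => -((c - ψ s) ^ α) / α) (Icc u v) := by
    apply ContinuousOn.div_const
    apply ContinuousOn.neg
    exact (continuousOn_const.sub hψc).rpow_const (fun s hs => Or.inr hα0.le)
  have hderiv : ∀ s ∈ Ioo u v,
      HasDerivAt (fun s => -((c - ψ s) ^ α) / α) (deriv ψ s * (c - ψ s) ^ (α - 1)) s := by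
    intro s hs
    have hs01 : s ∈ Ioo (0:ℝ) 1 := ⟨lt_of_le_of_lt h0u hs.1, lt_of_lt_of_le hs.2 hv1⟩
    have hd : HasDerivAt ψ (deriv ψ s) s := by
      have := (hψ.differentiableOn one_ne_zero).differentiableAt
        (Icc_mem_nhds hs01.1 hs01.2)
      exact this.hasDerivAt
    have hpos : 0 < c - ψ s := by
      have hsv : ψ s < ψ v :=
        hmono (hsub ⟨hs.1.le, hs.2.le⟩) (hsub (right_mem_Icc.2 huv)) hs.2
      linarith
    have h1 : HasDerivAt (fun s => c - ψ s) (-deriv ψ s) s := by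
      have := (hasDerivAt_const s c).sub hd
      rw [zero_sub] at this
      exact this
    have h2 := ((h1.rpow_const (p := α) (Or.inl hpos.ne')).neg.div_const α)
    refine h2.congr_deriv ?_
    field_simp
  have hnn : ∀ s ∈ Ioo u v, 0 ≤ deriv ψ s * (c - ψ s) ^ (α - 1) := by
    intro s hs
    have hs01 : s ∈ Icc (0:ℝ) 1 := ⟨h0u.trans hs.1.le, hs.2.le.trans hv1⟩
    have hpos : (0:ℝ) ≤ c - ψ s := by
      have := hle s ⟨hs.1.le, hs.2.le⟩; linarith
    exact mul_nonneg (hψ' s hs01).le (Real.rpow_nonneg hpos _)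
  have hint : IntervalIntegrable (fun s => deriv ψ s * (c - ψ s) ^ (α - 1)) volume u v := by
    rw [intervalIntegrable_iff_integrableOn_Ioc_of_le huv]
    exact intervalIntegral.integrableOn_deriv_of_nonneg hFcont hderiv hnn
  refine ⟨hint, ?_⟩
  rw [intervalIntegral.integral_eq_sub_of_hasDerivAt_of_le huv hFcont hderiv hint]
  field_simp
  ring

lemma aux_bound {ψ : ℝ → ℝ} {α : ℝ} (hψ : ContDiffOn ℝ 1 ψ (Icc 0 1))
    (hmono : StrictMonoOn ψ (Icc (0:ℝ) 1)) (hψ' : ∀ x ∈ Icc (0:ℝ) 1, 0 < deriv ψ x)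
    (hα0 : 0 < α) (hα1 : α < 1) {u v c : ℝ} (h0u : 0 ≤ u) (huv : u ≤ v) (hv1 : v ≤ 1)
    (hc : ψ v ≤ c) {h : ℝ → ℝ} {B : ℝ} (hB0 : 0 ≤ B)
    (hmeas : AEStronglyMeasurable h (volume.restrict (Ioc u v)))
    (hB : ∀ s ∈ Ioc u v, |h s| ≤ B) :
    IntervalIntegrable (fun s => deriv ψ s * (c - ψ s) ^ (α - 1) * h s) volume u v ∧
    |∫ s in u..v, deriv ψ s * (c - ψ s) ^ (α - 1) * h s| ≤
      B * ((c - ψ u) ^ α - (c - ψ v) ^ α) / α := by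
  set K : ℝ → ℝ := fun s => deriv ψ s * (c - ψ s) ^ (α - 1) with hK
  obtain ⟨hKint, hKval⟩ := aux_ftc hψ hmono hψ' hα0 hα1 h0u huv hv1 hc
  have hKint' : IntegrableOn K (Ioc u v) volume := by
    rwa [intervalIntegrable_iff_integrableOn_Ioc_of_le huv] at hKint
  -- nonnegativity of K on Ioc u v
  have hKnn : ∀ s ∈ Ioc u v, 0 ≤ K s := by
    intro s hs
    have hs01 : s ∈ Icc (0:ℝ) 1 := ⟨h0u.trans hs.1.le, hs.2.trans hv1⟩
    have hψs : ψ s ≤ c :=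
      (hmono.monotoneOn hs01 ⟨h0u.trans huv, hv1⟩ hs.2).trans hc
    exact mul_nonneg (hψ' s hs01).le (Real.rpow_nonneg (by linarith) _)
  -- measurability of K on restrict (Ioc u v)
  have hKmeas : AEStronglyMeasurable K (volume.restrict (Ioc u v)) := by
    have h1 : AEStronglyMeasurable K (volume.restrict (Ioo u v)) := by
      apply AEStronglyMeasurable.mul
      · exact (measurable_deriv ψ).aestronglyMeasurable
      · apply ContinuousOn.aestronglyMeasurable _ measurableSet_Ioo
        apply (continuousOn_const.sub ((hψ.continuousOn).mono
          (Ioo_subset_Icc_self.trans (Icc_subset_Icc h0u hv1)))).rpow_const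
        intro s hs
        left
        have hsv : ψ s < ψ v := hmono ⟨h0u.trans hs.1.le, hs.2.le.trans hv1⟩
          ⟨h0u.trans huv, hv1⟩ hs.2
        have : 0 < c - ψ s := by linarith
        exact this.ne'
    rwa [Measure.restrict_congr_set Ioo_ae_eq_Ioc] at h1
  -- the integrand
  have hImeas : AEStronglyMeasurable (fun s => K s * h s) (volume.restrict (Ioc u v)) :=
    hKmeas.mul hmeas
  have hptwise : ∀ s ∈ Ioc u v, |K s * h s| ≤ B * K s := by
    intro s hs
    rw [abs_mul, abs_of_nonneg (hKnn s hs)]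
    calc K s * |h s| ≤ K s * B := mul_le_mul_of_nonneg_left (hB s hs) (hKnn s hs)
    _ = B * K s := mul_comm _ _
  have hIint' : IntegrableOn (fun s => K s * h s) (Ioc u v) volume := by
    apply Integrable.mono (hKint'.const_mul B) hImeas
    rw [ae_restrict_iff' measurableSet_Ioc]
    filter_upwards with s hs
    rw [Real.norm_eq_abs, Real.norm_eq_abs, abs_of_nonneg (mul_nonneg hB0 (hKnn s hs))]
    exact hptwise s hs
  have hIint : IntervalIntegrable (fun s => K s * h s) volume u v := by
    rwa [intervalIntegrable_iff_integrableOn_Ioc_of_le huv]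
  refine ⟨hIint, ?_⟩
  rw [intervalIntegral.integral_of_le huv]
  calc |∫ s in Ioc u v, K s * h s| ≤ ∫ s in Ioc u v, |K s * h s| := by
        simpa [Real.norm_eq_abs, abs_mul] using
          MeasureTheory.norm_integral_le_integral_norm (μ := volume.restrict (Ioc u v))
            (fun s => K s * h s)
    _ ≤ ∫ s in Ioc u v, B * K s := by
        refine setIntegral_mono_on hIint'.abs (hKint'.const_mul B) measurableSet_Ioc ?_
        intro s hs
        simpa [abs_mul] using hptwise s hs
    _ = B * ∫ s in Ioc u v, K s := by exact MeasureTheory.integral_const_mul B K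
    _ = B * ((c - ψ u) ^ α - (c - ψ v) ^ α) / α := by
        rw [← intervalIntegral.integral_of_le huv, hKval]; ring

lemma aux_holder {ψ : ℝ → ℝ} {α : ℝ} (hψ : ContDiffOn ℝ 1 ψ (Icc 0 1))
    (hmono : StrictMonoOn ψ (Icc (0:ℝ) 1)) (hψ' : ∀ x ∈ Icc (0:ℝ) 1, 0 < deriv ψ x)
    (hα0 : 0 < α) (hα1 : α < 1) {h : ℝ → ℝ} {B : ℝ} (hB0 : 0 ≤ B)
    (hcont : Continuous h) (hB : ∀ s ∈ Icc (0:ℝ) 1, |h s| ≤ B)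
    {t t' : ℝ} (ht : t ∈ Icc (0:ℝ) 1) (ht' : t' ∈ Icc (0:ℝ) 1) (htt' : t ≤ t') :
    |(∫ s in (0:ℝ)..t', deriv ψ s * (ψ t' - ψ s) ^ (α - 1) * h s) -
      ∫ s in (0:ℝ)..t, deriv ψ s * (ψ t - ψ s) ^ (α - 1) * h s| ≤
      2 * B * (ψ t' - ψ t) ^ α / α := by
  have hψtt' : ψ t ≤ ψ t' := hmono.monotoneOn ht ht' htt'
  have hB1 : ∀ u v : ℝ, 0 ≤ u → v ≤ 1 → ∀ s ∈ Ioc u v, |h s| ≤ B := by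
    intro u v hu hv s hs
    exact hB s ⟨hu.trans hs.1.le, hs.2.trans hv⟩
  have I1 := aux_bound hψ hmono hψ' hα0 hα1 le_rfl ht.1 ht.2 hψtt' hB0
    (hcont.aestronglyMeasurable.restrict) (hB1 0 t le_rfl ht.2)
  have I2 := aux_bound hψ hmono hψ' hα0 hα1 ht.1 htt' ht'.2 le_rfl hB0
    (hcont.aestronglyMeasurable.restrict) (hB1 t t' ht.1 ht'.2)
  have I3 := aux_bound hψ hmono hψ' hα0 hα1 le_rfl ht.1 ht.2 le_rfl hB0
    (hcont.aestronglyMeasurable.restrict) (hB1 0 t le_rfl ht.2)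
  have hsplit : (∫ s in (0:ℝ)..t', deriv ψ s * (ψ t' - ψ s) ^ (α - 1) * h s) =
      (∫ s in (0:ℝ)..t, deriv ψ s * (ψ t' - ψ s) ^ (α - 1) * h s) +
      ∫ s in t..t', deriv ψ s * (ψ t' - ψ s) ^ (α - 1) * h s :=
    (intervalIntegral.integral_add_adjacent_intervals I1.1 I2.1).symm
  -- kernel integrability (without h)
  obtain ⟨hK'int, hK'val⟩ := aux_ftc hψ hmono hψ' hα0 hα1 (le_refl (0:ℝ)) ht.1 ht.2 hψtt'
  obtain ⟨hKint, hKval⟩ := aux_ftc hψ hmono hψ' hα0 hα1 (le_refl (0:ℝ)) ht.1 ht.2 le_rfl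
  have hK'int' : IntegrableOn (fun s => deriv ψ s * (ψ t' - ψ s) ^ (α - 1)) (Ioc 0 t) volume := by
    rwa [intervalIntegrable_iff_integrableOn_Ioc_of_le ht.1] at hK'int
  have hKint' : IntegrableOn (fun s => deriv ψ s * (ψ t - ψ s) ^ (α - 1)) (Ioc 0 t) volume := by
    rwa [intervalIntegrable_iff_integrableOn_Ioc_of_le ht.1] at hKint
  have hI1' : IntegrableOn (fun s => deriv ψ s * (ψ t' - ψ s) ^ (α - 1) * h s) (Ioc 0 t) volume := by
    have := I1.1; rwa [intervalIntegrable_iff_integrableOn_Ioc_of_le ht.1] at this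
  have hI3' : IntegrableOn (fun s => deriv ψ s * (ψ t - ψ s) ^ (α - 1) * h s) (Ioc 0 t) volume := by
    have := I3.1; rwa [intervalIntegrable_iff_integrableOn_Ioc_of_le ht.1] at this
  -- term 1 bound
  have hne : ∀ᵐ s : ℝ, s ≠ t := by
    rw [ae_iff]
    have hset : {s : ℝ | ¬s ≠ t} = {t} := by ext s; simp
    rw [hset]
    exact measure_singleton t
  have term1 : |(∫ s in (0:ℝ)..t, deriv ψ s * (ψ t' - ψ s) ^ (α - 1) * h s) -
      ∫ s in (0:ℝ)..t, deriv ψ s * (ψ t - ψ s) ^ (α - 1) * h s| ≤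
      B * (ψ t' - ψ t) ^ α / α := by
    rw [← intervalIntegral.integral_sub I1.1 I3.1]
    rw [intervalIntegral.integral_of_le ht.1]
    have hDint : IntegrableOn (fun s => B * ((deriv ψ s * (ψ t - ψ s) ^ (α - 1)) -
        deriv ψ s * (ψ t' - ψ s) ^ (α - 1))) (Ioc 0 t) volume :=
      (hKint'.sub hK'int').const_mul B
    calc |∫ s in Ioc (0:ℝ) t, (deriv ψ s * (ψ t' - ψ s) ^ (α - 1) * h s -
            deriv ψ s * (ψ t - ψ s) ^ (α - 1) * h s)|
        ≤ ∫ s in Ioc (0:ℝ) t, |deriv ψ s * (ψ t' - ψ s) ^ (α - 1) * h s -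
            deriv ψ s * (ψ t - ψ s) ^ (α - 1) * h s| := by
          simpa [Real.norm_eq_abs] using MeasureTheory.norm_integral_le_integral_norm
            (μ := volume.restrict (Ioc 0 t)) (fun s => deriv ψ s * (ψ t' - ψ s) ^ (α - 1) * h s -
              deriv ψ s * (ψ t - ψ s) ^ (α - 1) * h s)
      _ ≤ ∫ s in Ioc (0:ℝ) t, B * ((deriv ψ s * (ψ t - ψ s) ^ (α - 1)) -
            deriv ψ s * (ψ t' - ψ s) ^ (α - 1)) := by
          apply MeasureTheory.integral_mono_ae (hI1'.sub hI3').abs hDint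
          filter_upwards [ae_restrict_mem measurableSet_Ioc, ae_restrict_of_ae hne]
            with s hs hsne
          have hst : s < t := lt_of_le_of_ne hs.2 hsne
          have hs01 : s ∈ Icc (0:ℝ) 1 := ⟨hs.1.le, hs.2.trans ht.2⟩
          have hψst : ψ s < ψ t := hmono hs01 ht hst
          have hpos : 0 < ψ t - ψ s := by linarith
          have hK'K : deriv ψ s * (ψ t' - ψ s) ^ (α - 1) ≤
              deriv ψ s * (ψ t - ψ s) ^ (α - 1) := by
            apply mul_le_mul_of_nonneg_left _ (hψ' s hs01).le
            exact Real.rpow_le_rpow_of_nonpos hpos (by linarith) (by linarith)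
          have habs : |deriv ψ s * (ψ t' - ψ s) ^ (α - 1) * h s -
              deriv ψ s * (ψ t - ψ s) ^ (α - 1) * h s| =
              |h s| * (deriv ψ s * (ψ t - ψ s) ^ (α - 1) -
                deriv ψ s * (ψ t' - ψ s) ^ (α - 1)) := by
            rw [show deriv ψ s * (ψ t' - ψ s) ^ (α - 1) * h s -
                deriv ψ s * (ψ t - ψ s) ^ (α - 1) * h s =
                h s * (deriv ψ s * (ψ t' - ψ s) ^ (α - 1) -
                  deriv ψ s * (ψ t - ψ s) ^ (α - 1)) by ring, abs_mul,
              abs_sub_comm, abs_of_nonneg (sub_nonneg.2 hK'K)]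
          simp only [Pi.sub_apply]
          rw [habs]
          exact mul_le_mul_of_nonneg_right (hB s hs01) (by linarith)
      _ = B * ((∫ s in Ioc (0:ℝ) t, deriv ψ s * (ψ t - ψ s) ^ (α - 1)) -
            ∫ s in Ioc (0:ℝ) t, deriv ψ s * (ψ t' - ψ s) ^ (α - 1)) := by
          rw [← MeasureTheory.integral_sub hKint' hK'int']
          exact MeasureTheory.integral_const_mul B _
      _ ≤ B * (ψ t' - ψ t) ^ α / α := by
          rw [← intervalIntegral.integral_of_le ht.1, ← intervalIntegral.integral_of_le ht.1,
            hKval, hK'val, sub_self, Real.zero_rpow hα0.ne', sub_zero]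
          have h1 : (ψ t - ψ 0) ^ α ≤ (ψ t' - ψ 0) ^ α := by
            have h0t : ψ 0 ≤ ψ t := hmono.monotoneOn (left_mem_Icc.2 zero_le_one) ht ht.1
            exact Real.rpow_le_rpow (by linarith) (by linarith) hα0.le
          have key : (ψ t - ψ 0) ^ α - ((ψ t' - ψ 0) ^ α - (ψ t' - ψ t) ^ α) ≤
              (ψ t' - ψ t) ^ α := by linarith
          calc B * ((ψ t - ψ 0) ^ α / α - ((ψ t' - ψ 0) ^ α - (ψ t' - ψ t) ^ α) / α)
              = B * ((ψ t - ψ 0) ^ α - ((ψ t' - ψ 0) ^ α - (ψ t' - ψ t) ^ α)) / α := by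
                ring
            _ ≤ B * (ψ t' - ψ t) ^ α / α := by
                exact div_le_div_of_nonneg_right (mul_le_mul_of_nonneg_left key hB0) hα0.le
  have term2 : |∫ s in t..t', deriv ψ s * (ψ t' - ψ s) ^ (α - 1) * h s| ≤
      B * (ψ t' - ψ t) ^ α / α := by
    have := I2.2
    rwa [sub_self, Real.zero_rpow hα0.ne', sub_zero] at this
  calc |(∫ s in (0:ℝ)..t', deriv ψ s * (ψ t' - ψ s) ^ (α - 1) * h s) -
      ∫ s in (0:ℝ)..t, deriv ψ s * (ψ t - ψ s) ^ (α - 1) * h s|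
      = |((∫ s in (0:ℝ)..t, deriv ψ s * (ψ t' - ψ s) ^ (α - 1) * h s) -
          ∫ s in (0:ℝ)..t, deriv ψ s * (ψ t - ψ s) ^ (α - 1) * h s) +
          ∫ s in t..t', deriv ψ s * (ψ t' - ψ s) ^ (α - 1) * h s| := by
        rw [hsplit]; ring_nf
    _ ≤ B * (ψ t' - ψ t) ^ α / α + B * (ψ t' - ψ t) ^ α / α :=
        le_trans (abs_add_le _ _) (add_le_add term1 term2)
    _ = 2 * B * (ψ t' - ψ t) ^ α / α := by ring

lemma aux_cont {ψ : ℝ → ℝ} {α : ℝ} (hα0 : 0 < α)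
    (hψcont : ContinuousOn ψ (Icc (0:ℝ) 1)) (hmono : MonotoneOn ψ (Icc (0:ℝ) 1))
    {G : ℝ → ℝ} {C : ℝ} (hC : 0 ≤ C)
    (hG : ∀ t ∈ Icc (0:ℝ) 1, ∀ t' ∈ Icc (0:ℝ) 1, t ≤ t' →
      |G t' - G t| ≤ C * (ψ t' - ψ t) ^ α) :
    ContinuousOn G (Icc (0:ℝ) 1) := by
  intro t₀ ht₀
  rw [Metric.continuousWithinAt_iff]
  intro ε hε
  set η := (ε / (C + 1)) ^ (α⁻¹) with hη
  have hεC : 0 < ε / (C + 1) := div_pos hε (by linarith)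
  have hη0 : 0 < η := Real.rpow_pos_of_pos hεC _
  have hkey : ∀ u : ℝ, 0 ≤ u → u < η → C * u ^ α < ε := by
    intro u hu huη
    have h1 : u ^ α ≤ η ^ α := Real.rpow_le_rpow hu huη.le hα0.le
    have h2 : η ^ α = ε / (C + 1) := Real.rpow_inv_rpow hεC.le hα0.ne'
    have h3 : C * u ^ α ≤ C * (ε / (C + 1)) := by
      rw [← h2]; exact mul_le_mul_of_nonneg_left h1 hC
    have h4 : C * (ε / (C + 1)) < ε := by
      have hlt : C / (C + 1) < 1 := (div_lt_one (by linarith)).2 (by linarith)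
      calc C * (ε / (C + 1)) = (C / (C + 1)) * ε := by ring
        _ < 1 * ε := mul_lt_mul_of_pos_right hlt hε
        _ = ε := one_mul ε
    linarith
  obtain ⟨δ, hδ0, hδ⟩ := Metric.continuousWithinAt_iff.1 (hψcont t₀ ht₀) η hη0
  refine ⟨δ, hδ0, fun {t} ht hdist => ?_⟩
  rcases le_total t t₀ with h | h
  · have hb := hG t ht t₀ ht₀ h
    have hψle : ψ t ≤ ψ t₀ := hmono ht ht₀ h
    have hψlt : ψ t₀ - ψ t < η := by
      have := hδ ht hdist
      rw [Real.dist_eq] at this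
      rw [abs_sub_comm] at this
      rw [abs_of_nonneg (by linarith)] at this
      exact this
    rw [Real.dist_eq, abs_sub_comm]
    exact lt_of_le_of_lt hb (hkey _ (by linarith) hψlt)
  · have hb := hG t₀ ht₀ t ht h
    have hψle : ψ t₀ ≤ ψ t := hmono ht₀ ht h
    have hψlt : ψ t - ψ t₀ < η := by
      have := hδ ht hdist
      rw [Real.dist_eq] at this
      rw [abs_of_nonneg (by linarith)] at this
      exact this
    rw [Real.dist_eq]
    exact lt_of_le_of_lt hb (hkey _ (by linarith) hψlt)

lemma aux_master {ψ : ℝ → ℝ} {α : ℝ} (hψ : ContDiffOn ℝ 1 ψ (Icc 0 1))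
    (hmono : StrictMonoOn ψ (Icc (0:ℝ) 1)) (hψ' : ∀ x ∈ Icc (0:ℝ) 1, 0 < deriv ψ x)
    (hα0 : 0 < α) (hα1 : α < 1) {t : ℝ} (ht : t ∈ Icc (0:ℝ) 1) {h : ℝ → ℝ} {B : ℝ}
    (hB0 : 0 ≤ B) (hm : AEStronglyMeasurable h (volume.restrict (Ioc 0 t)))
    (hB : ∀ s ∈ Ioc (0:ℝ) t, |h s| ≤ B) :
    IntervalIntegrable (fun s => deriv ψ s * (ψ t - ψ s) ^ (α - 1) * h s) volume 0 t ∧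
    |∫ s in (0:ℝ)..t, deriv ψ s * (ψ t - ψ s) ^ (α - 1) * h s| ≤ B * (ψ t - ψ 0) ^ α / α := by
  have := aux_bound hψ hmono hψ' hα0 hα1 le_rfl ht.1 ht.2 le_rfl hB0 hm hB
  rwa [sub_self, Real.zero_rpow hα0.ne', sub_zero] at this

lemma aux_factor {ψ : ℝ → ℝ} {α : ℝ} (hmono : StrictMonoOn ψ (Icc (0:ℝ) 1))
    (hα0 : 0 < α) {t : ℝ} (ht : t ∈ Icc (0:ℝ) 1) {c : ℝ} (hc : 0 ≤ c) :
    (1 / Real.Gamma α) * (c * (ψ t - ψ 0) ^ α / α) ≤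
      c * (ψ 1 - ψ 0) ^ α / Real.Gamma (α + 1) := by
  have hΓα : 0 < Real.Gamma α := Real.Gamma_pos_of_pos hα0
  have hΓα1 : Real.Gamma (α + 1) = α * Real.Gamma α := Real.Gamma_add_one hα0.ne'
  have h0t : ψ 0 ≤ ψ t := hmono.monotoneOn (left_mem_Icc.2 zero_le_one) ht ht.1
  have ht1 : ψ t ≤ ψ 1 := hmono.monotoneOn ht (right_mem_Icc.2 zero_le_one) ht.2
  have hmax : (ψ t - ψ 0) ^ α ≤ (ψ 1 - ψ 0) ^ α :=
    Real.rpow_le_rpow (by linarith) (by linarith) hα0.le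
  rw [hΓα1]
  calc (1 / Real.Gamma α) * (c * (ψ t - ψ 0) ^ α / α)
      = c * (ψ t - ψ 0) ^ α / (α * Real.Gamma α) := by
        rw [one_div, inv_mul_eq_div, div_div]
    _ ≤ c * (ψ 1 - ψ 0) ^ α / (α * Real.Gamma α) :=
        div_le_div_of_nonneg_right (mul_le_mul_of_nonneg_left hmax hc) (mul_pos hα0 hΓα).le

lemma aux_exists {ψ : ℝ → ℝ} {f : ℝ → ℝ → ℝ} {α M L : ℝ}
    (hψ : ContDiffOn ℝ 1 ψ (Icc 0 1)) (hmono : StrictMonoOn ψ (Icc (0:ℝ) 1))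
    (hψ' : ∀ x ∈ Icc (0:ℝ) 1, 0 < deriv ψ x)
    (hα0 : 0 < α) (hα1 : α < 1)
    (hfcont : Continuous (fun p : ℝ × ℝ => f p.1 p.2))
    (hM : 0 < M) (hbdd : ∀ t ∈ Icc (0:ℝ) 1, ∀ y : ℝ, |f t y| ≤ M)
    (hL : 0 < L) (hLip : ∀ t ∈ Icc (0:ℝ) 1, ∀ x y : ℝ, |f t x - f t y| ≤ L * |x - y|)
    (hcontr : L * (ψ 1 - ψ 0) ^ α / Real.Gamma (α + 1) < 1) :
    ∃ y : ℝ → ℝ, Continuous y ∧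
      ∀ t ∈ Icc (0:ℝ) 1, y t = (1 / Real.Gamma α) *
        ∫ s in (0:ℝ)..t, deriv ψ s * (ψ t - ψ s) ^ (α - 1) * f s (y s) := by
  have hΓα : 0 < Real.Gamma α := Real.Gamma_pos_of_pos hα0
  have hψ01 : ψ 0 ≤ ψ 1 :=
    (hmono (left_mem_Icc.2 zero_le_one) (right_mem_Icc.2 zero_le_one) zero_lt_one).le
  have hΓα1 : 0 < Real.Gamma (α + 1) := Real.Gamma_pos_of_pos (by linarith)
  set k : ℝ := L * (ψ 1 - ψ 0) ^ α / Real.Gamma (α + 1) with hkdef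
  have hk0 : 0 ≤ k :=
    div_nonneg (mul_nonneg hL.le (Real.rpow_nonneg (by linarith) _)) hΓα1.le
  have hraw_cont : ∀ Y : C(Icc (0:ℝ) 1, ℝ), ContinuousOn
      (fun t => (1 / Real.Gamma α) * ∫ s in (0:ℝ)..t,
        deriv ψ s * (ψ t - ψ s) ^ (α - 1) * f s (Y (projIcc 0 1 zero_le_one s)))
      (Icc (0:ℝ) 1) := by
    intro Y
    have hhc : Continuous (fun s => f s (Y (projIcc 0 1 zero_le_one s))) :=
      hfcont.comp (continuous_id.prodMk (Y.continuous.comp continuous_projIcc))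
    have hhb : ∀ s ∈ Icc (0:ℝ) 1, |f s (Y (projIcc 0 1 zero_le_one s))| ≤ M :=
      fun s hs => hbdd s hs _
    apply aux_cont hα0 hψ.continuousOn hmono.monotoneOn
      (C := 1 / Real.Gamma α * (2 * M) / α)
      (div_nonneg (mul_nonneg (one_div_nonneg.2 hΓα.le) (by linarith)) hα0.le)
    intro t ht t' ht' htt'
    have H := aux_holder hψ hmono hψ' hα0 hα1 hM.le hhc hhb ht ht' htt'
    rw [← mul_sub, abs_mul, abs_of_nonneg (one_div_nonneg.2 hΓα.le)]
    have heq : 1 / Real.Gamma α * (2 * M) / α * (ψ t' - ψ t) ^ α =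
        1 / Real.Gamma α * (2 * M * (ψ t' - ψ t) ^ α / α) := by ring
    rw [heq]
    exact mul_le_mul_of_nonneg_left H (one_div_nonneg.2 hΓα.le)
  set Φ : C(Icc (0:ℝ) 1, ℝ) → C(Icc (0:ℝ) 1, ℝ) := fun Y =>
    ⟨(Icc (0:ℝ) 1).domRestrict (fun t => (1 / Real.Gamma α) * ∫ s in (0:ℝ)..t,
        deriv ψ s * (ψ t - ψ s) ^ (α - 1) * f s (Y (projIcc 0 1 zero_le_one s))),
      (hraw_cont Y).restrict⟩ with hΦdef
  have hlip : ∀ Y Z, dist (Φ Y) (Φ Z) ≤ k * dist Y Z := by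
    intro Y Z
    rw [ContinuousMap.dist_le (mul_nonneg hk0 dist_nonneg)]
    intro t
    have htm : (t:ℝ) ∈ Icc (0:ℝ) 1 := t.2
    rw [hΦdef]
    simp only [ContinuousMap.coe_mk, Set.restrict_apply]
    rw [Real.dist_eq, ← mul_sub]
    have hY : Continuous (fun s => f s (Y (projIcc 0 1 zero_le_one s))) :=
      hfcont.comp (continuous_id.prodMk (Y.continuous.comp continuous_projIcc))
    have hZ : Continuous (fun s => f s (Z (projIcc 0 1 zero_le_one s))) :=
      hfcont.comp (continuous_id.prodMk (Z.continuous.comp continuous_projIcc))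
    have hIY := (aux_master hψ hmono hψ' hα0 hα1 htm hM.le
      hY.aestronglyMeasurable.restrict
      (fun s hs => hbdd s ⟨hs.1.le, hs.2.trans htm.2⟩ _)).1
    have hIZ := (aux_master hψ hmono hψ' hα0 hα1 htm hM.le
      hZ.aestronglyMeasurable.restrict
      (fun s hs => hbdd s ⟨hs.1.le, hs.2.trans htm.2⟩ _)).1
    have hsub := aux_master hψ hmono hψ' hα0 hα1 htm
      (B := L * dist Y Z) (mul_nonneg hL.le dist_nonneg)
      ((hY.sub hZ).aestronglyMeasurable.restrict)
      (fun s hs => by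
        have hs1 : s ∈ Icc (0:ℝ) 1 := ⟨hs.1.le, hs.2.trans htm.2⟩
        calc |f s (Y (projIcc 0 1 zero_le_one s)) - f s (Z (projIcc 0 1 zero_le_one s))|
            ≤ L * |Y (projIcc 0 1 zero_le_one s) - Z (projIcc 0 1 zero_le_one s)| :=
              hLip s hs1 _ _
          _ ≤ L * dist Y Z := by
              apply mul_le_mul_of_nonneg_left _ hL.le
              rw [← Real.dist_eq]
              exact ContinuousMap.dist_apply_le_dist _
        )
    have hcomb : (∫ s in (0:ℝ)..(t:ℝ), deriv ψ s * (ψ t - ψ s) ^ (α - 1) *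
          f s (Y (projIcc 0 1 zero_le_one s))) -
        (∫ s in (0:ℝ)..(t:ℝ), deriv ψ s * (ψ t - ψ s) ^ (α - 1) *
          f s (Z (projIcc 0 1 zero_le_one s))) =
        ∫ s in (0:ℝ)..(t:ℝ), deriv ψ s * (ψ t - ψ s) ^ (α - 1) *
          (f s (Y (projIcc 0 1 zero_le_one s)) - f s (Z (projIcc 0 1 zero_le_one s))) := by
      rw [← intervalIntegral.integral_sub hIY hIZ]
      exact intervalIntegral.integral_congr (fun s _ => by ring)
    rw [hcomb, abs_mul, abs_of_nonneg (one_div_nonneg.2 hΓα.le)]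
    calc (1 / Real.Gamma α) * |∫ s in (0:ℝ)..(t:ℝ), deriv ψ s * (ψ t - ψ s) ^ (α - 1) *
          (f s (Y (projIcc 0 1 zero_le_one s)) - f s (Z (projIcc 0 1 zero_le_one s)))|
        ≤ (1 / Real.Gamma α) * (L * dist Y Z * (ψ t - ψ 0) ^ α / α) :=
          mul_le_mul_of_nonneg_left hsub.2 (one_div_nonneg.2 hΓα.le)
      _ ≤ L * dist Y Z * (ψ 1 - ψ 0) ^ α / Real.Gamma (α + 1) :=
          aux_factor hmono hα0 htm (mul_nonneg hL.le dist_nonneg)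
      _ = k * dist Y Z := by rw [hkdef]; ring
  have hk1 : (⟨k, hk0⟩ : NNReal) < 1 := by exact_mod_cast hcontr
  have hct : ContractingWith ⟨k, hk0⟩ Φ :=
    ⟨hk1, LipschitzWith.of_dist_le_mul (fun Y Z => hlip Y Z)⟩
  set Y₀ := ContractingWith.fixedPoint Φ hct with hY₀def
  have hfix : Φ Y₀ = Y₀ := hct.fixedPoint_isFixedPt
  refine ⟨fun t => Y₀ (projIcc 0 1 zero_le_one t),
    Y₀.continuous.comp continuous_projIcc, ?_⟩
  intro t htm
  have h2 := DFunLike.congr_fun hfix (⟨t, htm⟩ : Icc (0:ℝ) 1)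
  rw [hΦdef] at h2
  simp only [ContinuousMap.coe_mk, Set.restrict_apply] at h2
  simp only [projIcc_of_mem zero_le_one htm]
  exact h2.symm

theorem existence_uniqueness (α β γ M L : ℝ) (ψ : ℝ → ℝ) (f : ℝ → ℝ → ℝ)
    (hψ : ContDiffOn ℝ 1 ψ (Icc (0:ℝ) 1)) (hmono : StrictMonoOn ψ (Icc (0:ℝ) 1))
    (hψ' : ∀ x ∈ Icc (0:ℝ) 1, 0 < deriv ψ x)
    (hα0 : 0 < α) (hα1 : α < 1) (hβ0 : 0 ≤ β) (hβ1 : β ≤ 1)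
    (hγ : γ = α + β * (1 - α))
    (hfcont : Continuous (fun p : ℝ × ℝ => f p.1 p.2))
    (hM : 0 < M) (hbdd : ∀ t ∈ Icc (0:ℝ) 1, ∀ y : ℝ, |f t y| ≤ M)
    (hL : 0 < L) (hLip : ∀ t ∈ Icc (0:ℝ) 1, ∀ x y : ℝ, |f t x - f t y| ≤ L * |x - y|)
    (hcontr : L * (ψ 1 - ψ 0) ^ α / Real.Gamma (α + 1) < 1) :
    ∃ y : ℝ → ℝ, MemWeighted ψ γ y ∧
      (∀ t ∈ Ioc (0:ℝ) 1,
        y t = (1 / Real.Gamma α) *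
          ∫ s in (0:ℝ)..t, deriv ψ s * (ψ t - ψ s) ^ (α - 1) * f s (y s)) ∧
      ∀ z : ℝ → ℝ, MemWeighted ψ γ z →
        (∀ t ∈ Ioc (0:ℝ) 1,
          z t = (1 / Real.Gamma α) *
            ∫ s in (0:ℝ)..t, deriv ψ s * (ψ t - ψ s) ^ (α - 1) * f s (z s)) →
        ∀ t ∈ Ioc (0:ℝ) 1, z t = y t := by
  have hΓα : 0 < Real.Gamma α := Real.Gamma_pos_of_pos hα0
  have hΓα1 : 0 < Real.Gamma (α + 1) := Real.Gamma_pos_of_pos (by linarith)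
  have hγ1 : γ ≤ 1 := by nlinarith
  obtain ⟨y, hycont, hyeq⟩ := aux_exists hψ hmono hψ' hα0 hα1 hfcont hM hbdd hL hLip hcontr
  have hy_aesm : ∀ t : ℝ, AEStronglyMeasurable (fun s => f s (y s))
      (volume.restrict (Ioc 0 t)) :=
    fun t => (hfcont.comp (continuous_id.prodMk hycont)).aestronglyMeasurable.restrict
  have hybdd : ∀ t ∈ Icc (0:ℝ) 1, |y t| ≤ M * (ψ 1 - ψ 0) ^ α / Real.Gamma (α + 1) := by
    intro t htm
    rw [hyeq t htm, abs_mul, abs_of_nonneg (one_div_nonneg.2 hΓα.le)]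
    have h1 := (aux_master hψ hmono hψ' hα0 hα1 htm hM.le (hy_aesm t)
      (fun s hs => hbdd s ⟨hs.1.le, hs.2.trans htm.2⟩ _)).2
    exact le_trans (mul_le_mul_of_nonneg_left h1 (one_div_nonneg.2 hΓα.le))
      (aux_factor hmono hα0 htm hM.le)
  refine ⟨y, ⟨fun t => (ψ t - ψ 0) ^ (1 - γ) * y t, ?_, fun t ht => rfl⟩,
    fun t ht => hyeq t ⟨ht.1.le, ht.2⟩, ?_⟩
  · exact ((hψ.continuousOn.sub continuousOn_const).rpow_const
      (fun x hx => Or.inr (by linarith))).mul hycont.continuousOn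
  · intro z hz hzeq
    obtain ⟨g, hgcont, hgz⟩ := hz
    have hz_aesm : ∀ t : ℝ, t ≤ 1 → AEStronglyMeasurable z (volume.restrict (Ioc 0 t)) := by
      intro t ht1
      have hsub : Ioc (0:ℝ) t ⊆ Ioc (0:ℝ) 1 := Ioc_subset_Ioc le_rfl ht1
      have hsub' : Ioc (0:ℝ) t ⊆ Icc (0:ℝ) 1 := hsub.trans Ioc_subset_Icc_self
      have hzc : ContinuousOn (fun s => g s * (ψ s - ψ 0) ^ (γ - 1)) (Ioc 0 t) := by
        apply (hgcont.mono hsub').mul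
        apply ((hψ.continuousOn.mono hsub').sub continuousOn_const).rpow_const
        intro s hs
        left
        have := hmono (left_mem_Icc.2 zero_le_one) (hsub' hs) hs.1
        exact (by linarith : (0:ℝ) < ψ s - ψ 0).ne'
      apply (hzc.aestronglyMeasurable measurableSet_Ioc).congr
      refine (ae_restrict_iff' measurableSet_Ioc).2 ?_
      filter_upwards with s hs
      have hgs := hgz s (hsub hs)
      have hpos : 0 < ψ s - ψ 0 := by
        have := hmono (left_mem_Icc.2 zero_le_one) (hsub' hs) hs.1
        linarith
      have hcanc : (ψ s - ψ 0) ^ (1 - γ) * (ψ s - ψ 0) ^ (γ - 1) = 1 := by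
        rw [← Real.rpow_add hpos]
        norm_num
      calc g s * (ψ s - ψ 0) ^ (γ - 1)
          = ((ψ s - ψ 0) ^ (1 - γ) * (ψ s - ψ 0) ^ (γ - 1)) * z s := by rw [hgs]; ring
        _ = z s := by rw [hcanc, one_mul]
    have hfz_aesm : ∀ t : ℝ, t ≤ 1 → AEStronglyMeasurable (fun s => f s (z s))
        (volume.restrict (Ioc 0 t)) := by
      intro t ht1
      exact (hfcont.measurable.comp_aemeasurable
        (aemeasurable_id.prodMk (hz_aesm t ht1).aemeasurable)).aestronglyMeasurable
    have hzbdd : ∀ t ∈ Ioc (0:ℝ) 1, |z t| ≤ M * (ψ 1 - ψ 0) ^ α / Real.Gamma (α + 1) := by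
      intro t ht
      have htm : t ∈ Icc (0:ℝ) 1 := ⟨ht.1.le, ht.2⟩
      rw [hzeq t ht, abs_mul, abs_of_nonneg (one_div_nonneg.2 hΓα.le)]
      have h1 := (aux_master hψ hmono hψ' hα0 hα1 htm hM.le (hfz_aesm t ht.2)
        (fun s hs => hbdd s ⟨hs.1.le, hs.2.trans ht.2⟩ _)).2
      exact le_trans (mul_le_mul_of_nonneg_left h1 (one_div_nonneg.2 hΓα.le))
        (aux_factor hmono hα0 htm hM.le)
    set d : ℝ → ℝ := fun t => |z t - y t| with hddef
    set S : ℝ := sSup (d '' Ioc 0 1) with hSdef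
    have hbdd_ab : BddAbove (d '' Ioc 0 1) := by
      refine ⟨M * (ψ 1 - ψ 0) ^ α / Real.Gamma (α + 1) +
        M * (ψ 1 - ψ 0) ^ α / Real.Gamma (α + 1), ?_⟩
      rintro x ⟨t, ht, rfl⟩
      calc d t ≤ |z t| + |y t| := by
            have := abs_add_le (z t) (-(y t))
            show |z t - y t| ≤ _
            simpa [sub_eq_add_neg] using this
        _ ≤ _ := add_le_add (hzbdd t ht) (hybdd t ⟨ht.1.le, ht.2⟩)
    have hne : (d '' Ioc 0 1).Nonempty := ⟨d 1, ⟨1, ⟨zero_lt_one, le_rfl⟩, rfl⟩⟩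
    have hdS : ∀ t ∈ Ioc (0:ℝ) 1, d t ≤ S := fun t ht => le_csSup hbdd_ab ⟨t, ht, rfl⟩
    have hS0 : 0 ≤ S := le_trans (abs_nonneg _) (hdS 1 ⟨zero_lt_one, le_rfl⟩)
    have hkey : ∀ t ∈ Ioc (0:ℝ) 1,
        d t ≤ (L * (ψ 1 - ψ 0) ^ α / Real.Gamma (α + 1)) * S := by
      intro t ht
      have htm : t ∈ Icc (0:ℝ) 1 := ⟨ht.1.le, ht.2⟩
      have hIz := (aux_master hψ hmono hψ' hα0 hα1 htm hM.le (hfz_aesm t ht.2)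
        (fun s hs => hbdd s ⟨hs.1.le, hs.2.trans ht.2⟩ _)).1
      have hIy := (aux_master hψ hmono hψ' hα0 hα1 htm hM.le (hy_aesm t)
        (fun s hs => hbdd s ⟨hs.1.le, hs.2.trans ht.2⟩ _)).1
      have hsub := aux_master hψ hmono hψ' hα0 hα1 htm (B := L * S)
        (mul_nonneg hL.le hS0)
        ((hfz_aesm t ht.2).sub (hy_aesm t))
        (fun s hs => by
          have hs1 : s ∈ Icc (0:ℝ) 1 := ⟨hs.1.le, hs.2.trans ht.2⟩
          have hsIoc : s ∈ Ioc (0:ℝ) 1 := ⟨hs.1, hs.2.trans ht.2⟩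
          calc |f s (z s) - f s (y s)| ≤ L * |z s - y s| := hLip s hs1 _ _
            _ ≤ L * S := mul_le_mul_of_nonneg_left (hdS s hsIoc) hL.le)
      have e1 : z t - y t = (1 / Real.Gamma α) *
          ((∫ s in (0:ℝ)..t, deriv ψ s * (ψ t - ψ s) ^ (α - 1) * f s (z s)) -
           ∫ s in (0:ℝ)..t, deriv ψ s * (ψ t - ψ s) ^ (α - 1) * f s (y s)) := by
        rw [hzeq t ht, hyeq t htm]; ring
      have e2 : (∫ s in (0:ℝ)..t, deriv ψ s * (ψ t - ψ s) ^ (α - 1) * f s (z s)) -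
          (∫ s in (0:ℝ)..t, deriv ψ s * (ψ t - ψ s) ^ (α - 1) * f s (y s)) =
          ∫ s in (0:ℝ)..t, deriv ψ s * (ψ t - ψ s) ^ (α - 1) * (f s (z s) - f s (y s)) := by
        rw [← intervalIntegral.integral_sub hIz hIy]
        exact intervalIntegral.integral_congr (fun s _ => by ring)
      calc d t = |z t - y t| := rfl
        _ = (1 / Real.Gamma α) *
            |∫ s in (0:ℝ)..t, deriv ψ s * (ψ t - ψ s) ^ (α - 1) *
              (f s (z s) - f s (y s))| := by
            rw [e1, e2, abs_mul, abs_of_nonneg (one_div_nonneg.2 hΓα.le)]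
        _ ≤ (1 / Real.Gamma α) * (L * S * (ψ t - ψ 0) ^ α / α) :=
            mul_le_mul_of_nonneg_left hsub.2 (one_div_nonneg.2 hΓα.le)
        _ ≤ L * S * (ψ 1 - ψ 0) ^ α / Real.Gamma (α + 1) :=
            aux_factor hmono hα0 htm (mul_nonneg hL.le hS0)
        _ = (L * (ψ 1 - ψ 0) ^ α / Real.Gamma (α + 1)) * S := by ring
    have hSk : S ≤ (L * (ψ 1 - ψ 0) ^ α / Real.Gamma (α + 1)) * S := by
      apply csSup_le hne
      rintro x ⟨t, ht, rfl⟩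
      exact hkey t ht
    have hS_le0 : S ≤ 0 := by nlinarith [hSk, hS0, hcontr]
    intro t ht
    have h1 : d t ≤ 0 := le_trans (hdS t ht) hS_le0
    have h2 : |z t - y t| = 0 := le_antisymm h1 (abs_nonneg _)
    exact sub_eq_zero.1 (abs_eq_zero.1 h2)
end
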